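/- The function G : ℝ → ℝ defined by G(x) = x⁴ · (15 − 4x − 10x²/(1 − 2x(1−x))) is strictly increasing on the open interval (0,1). In particular, for p, q ∈ (0,1) one has G(p) > G(q) if and only if p > q. -/

import Mathlib

noncomputable def G (x : ℝ) : ℝ := x^4 * (15 - 4*x - 10*x^2 / (1 - 2*x*(1-x)))

lemma denom_ne (x : ℝ) : (1 - 2*x*(1-x)) ≠ 0 := by nlinarith [sq_nonneg (2*x-1)]

lemma hasDerivAt_G (x : ℝ) :
    HasDerivAt G (20*x^3*(1-x)^3*(4*x^2-4*x+3)/(1 - 2*x*(1-x))^2) x := by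
  have hd := denom_ne x
  have h1 : HasDerivAt (fun x : ℝ => 10*x^2) (20*x) x := by
    have := (hasDerivAt_pow 2 x).const_mul (10:ℝ)
    refine this.congr_deriv ?_
    simp; ring
  have h2 : HasDerivAt (fun x : ℝ => 1 - 2*x*(1-x)) (4*x - 2) x := by
    have h := (hasDerivAt_const x (1:ℝ)).sub
      ((HasDerivAt.const_mul (2:ℝ) (hasDerivAt_id' x)).mul
        ((hasDerivAt_const x (1:ℝ)).sub (hasDerivAt_id' x)))
    refine h.congr_deriv ?_; simp; ring
  have hdiv := h1.div h2 hd
  have h3 : HasDerivAt (fun x : ℝ => 15 - 4*x - 10*x^2/(1 - 2*x*(1-x)))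
      (-4 - (20*x*(1 - 2*x*(1-x)) - 10*x^2*(4*x-2))/(1 - 2*x*(1-x))^2) x := by
    have h4 : HasDerivAt (fun x : ℝ => 15 - 4*x) (-4) x := by
      exact ((hasDerivAt_const x (15:ℝ)).sub (HasDerivAt.const_mul (4:ℝ) (hasDerivAt_id' x))).congr_deriv (by ring)
    exact (h4.sub hdiv).congr_deriv (by ring)
  have h5 : HasDerivAt (fun x : ℝ => x^4) (4*x^3) x := by
    simpa using hasDerivAt_pow 4 x
  have := h5.mul h3
  refine this.congr_deriv ?_
  generalize hD : 1 - 2 * x * (1 - x) = D at *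
  field_simp
  subst hD
  ring

lemma G_mono : StrictMonoOn G (Set.Ioo (0:ℝ) 1) := by
  have hcont : ContinuousOn G (Set.Ioo (0:ℝ) 1) :=
    fun x _ => (hasDerivAt_G x).continuousAt.continuousWithinAt
  apply strictMonoOn_of_deriv_pos (convex_Ioo 0 1) hcont
  intro x hx
  rw [interior_Ioo] at hx
  obtain ⟨hx0, hx1⟩ := hx
  rw [(hasDerivAt_G x).deriv]
  apply div_pos
  · have h1 : (0:ℝ) < 20*x^3 := by nlinarith [pow_pos hx0 3]
    have h2 : (0:ℝ) < (1-x)^3 := pow_pos (by linarith) 3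
    have h3 : (0:ℝ) < 4*x^2-4*x+3 := by nlinarith [sq_nonneg (2*x-1)]
    exact mul_pos (mul_pos h1 h2) h3
  · have h : (0:ℝ) < 1 - 2*x*(1-x) := by nlinarith [sq_nonneg (2*x-1)]
    exact pow_pos h 2

theorem G_strictMonoOn :
    StrictMonoOn G (Set.Ioo (0:ℝ) 1) ∧
    ∀ p ∈ Set.Ioo (0:ℝ) 1, ∀ q ∈ Set.Ioo (0:ℝ) 1, (G p > G q ↔ p > q) := by
  refine ⟨G_mono, fun p hp q hq => ?_⟩
  exact G_mono.lt_iff_lt hq hp
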